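/- (Structure of Lax operators, nonisospectral part) Suppose (EW₀)U - UW₀ = U'[ρ₀] + λ·U_λ and for each j ≥ 1, (EΘⱼ)U - UΘⱼ = U'[ρ_j] - λ·U'[ρ_{j-1}]. Define W_l = λ^l W₀ + Σ_{j=1}^{l} λ^{l-j} Θⱼ. Then for all l ≥ 0, (EW_l)U - UW_l = U'[ρ_l] + λ^{l+1}·U_λ. -/
import Mathlib


/-- Structure of Lax operators, nonisospectral part (Theorem 3, second half).
In an associative algebra with an endomorphism `E` and a central element `l`
(playing the role of λ) fixed by `E`, suppose
  (EW₀)U - UW₀ = Uρ 0 + l·Ulam    (where `Uρ j` stands for U'[ρ_j])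
and for each j ≥ 1,
  (EΘⱼ)U - UΘⱼ = Uρ j - l·Uρ (j-1).
Then W_l = l^l W₀ + Σ_{j=1}^{l} l^{l-j} Θⱼ satisfies
(EW_l)U - UW_l = Uρ l + l^{l+1}·Ulam. -/
theorem lax_operator_structure_nonisospectral
    {A : Type*} [Ring A]
    (E : A →+* A) (l : A)
    (hl_central : ∀ x : A, l * x = x * l)
    (hEl : E l = l)
    (U Ulam W₀ : A) (Θ : ℕ → A) (Uρ : ℕ → A)
    (hW₀ : (E W₀) * U - U * W₀ = Uρ 0 + l * Ulam)
    (hΘ : ∀ j : ℕ, (E (Θ (j + 1))) * U - U * (Θ (j + 1)) = Uρ (j + 1) - l * Uρ j) :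
    ∀ m : ℕ,
      (E (l ^ m * W₀ + ∑ j ∈ Finset.Icc 1 m, l ^ (m - j) * Θ j)) * U
        - U * (l ^ m * W₀ + ∑ j ∈ Finset.Icc 1 m, l ^ (m - j) * Θ j)
      = Uρ m + l ^ (m + 1) * Ulam := by
  intro m
  induction m with
  | zero => simpa using hW₀
  | succ n ih =>
    set W : ℕ → A := fun k => l ^ k * W₀ + ∑ j ∈ Finset.Icc 1 k, l ^ (k - j) * Θ j with hW
    have hstep : W (n + 1) = l * W n + Θ (n + 1) := by
      simp only [hW]
      rw [Finset.sum_Icc_succ_top (by omega : 1 ≤ n + 1)]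
      have hsum : ∑ j ∈ Finset.Icc 1 n, l ^ (n + 1 - j) * Θ j
          = l * ∑ j ∈ Finset.Icc 1 n, l ^ (n - j) * Θ j := by
        rw [Finset.mul_sum]
        refine Finset.sum_congr rfl fun j hj => ?_
        have hjn : j ≤ n := (Finset.mem_Icc.mp hj).2
        have hnj : n + 1 - j = (n - j) + 1 := by omega
        rw [hnj, pow_succ, ← hl_central (l ^ (n - j)), mul_assoc]
      rw [hsum, pow_succ, ← hl_central (l ^ n), mul_add, mul_assoc,
        Nat.sub_self, pow_zero, one_mul, add_assoc]
    show E (W (n + 1)) * U - U * W (n + 1) = Uρ (n + 1) + l ^ (n + 1 + 1) * Ulam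
    rw [hstep, map_add, map_mul, hEl]
    have hc : U * (l * W n) = l * (U * W n) := by
      rw [← mul_assoc, ← hl_central U, mul_assoc]
    have key : (l * E (W n) + E (Θ (n + 1))) * U - U * (l * W n + Θ (n + 1))
        = l * (E (W n) * U - U * W n) + (E (Θ (n + 1)) * U - U * Θ (n + 1)) := by
      rw [add_mul, mul_add, hc]
      noncomm_ring
    rw [key, ih, hΘ n]
    have hl2 : l * l ^ (n + 1) = l ^ (n + 1 + 1) := by
      rw [hl_central (l ^ (n + 1)), ← pow_succ]
    rw [mul_add, ← mul_assoc, hl2]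
    abel
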